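/- arXiv:2401.11003 — 2 statements merged into one kernel-verified Lean document; each statement's English description precedes it below -/
import Mathlib

section
/- Let (q_n)_{n≥0} satisfy q_0 = 1 and q_n > 0, and define (γ_n)_{n≥0} by γ_0 = 1 and ∑_{k=0}^{n} q_{n−k} γ_k = 0 for n ≥ 1. Let (α_n) be any real sequence and set b_{m,n} = ∑_{l=0}^{m} A_{m−l}^{α_n−1} γ_l. Then for every sequence of real numbers S = (s_n) and every n, σ_n^{α_n}(S) = ∑_{k=0}^{n} (b_{n−k,n} Q_k / A_n^{α_n}) N_k^{(q)}(S), where Q_k = ∑_{j=0}^{k} q_j. -/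
open Finset

/-- `A_n^α = (1+α)(2+α)⋯(n+α)/n!`, with `A_0^α = 1`. -/
noncomputable def cesA (n : ℕ) (α : ℝ) : ℝ :=
  (∏ i ∈ Finset.range n, ((i : ℝ) + 1 + α)) / (n.factorial : ℝ)

/-- The `(C, α_n)` means with varying parameters:
`σ_n^{α_n}(S) = (1/A_n^{α_n}) ∑_{j=0}^{n} A_{n-j}^{α_n - 1} s_j`. -/
noncomputable def cesaroVar (α : ℕ → ℝ) (s : ℕ → ℝ) (n : ℕ) : ℝ :=
  (1 / cesA n (α n)) * ∑ j ∈ Finset.range (n + 1), cesA (n - j) (α n - 1) * s j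

/-- `Q_n = ∑_{k=0}^n q_k`. -/
noncomputable def bigQ (q : ℕ → ℝ) (n : ℕ) : ℝ := ∑ k ∈ Finset.range (n + 1), q k

/-- The Nörlund means `N_n^{(q)}(S) = (1/Q_n) ∑_{k=0}^{n} q_{n-k} s_k`. -/
noncomputable def norlund (q : ℕ → ℝ) (s : ℕ → ℝ) (n : ℕ) : ℝ :=
  (1 / bigQ q n) * ∑ k ∈ Finset.range (n + 1), q (n - k) * s k

lemma coeff_mk_mul (f g : ℕ → ℝ) (n : ℕ) :
    (PowerSeries.coeff n) (PowerSeries.mk f * PowerSeries.mk g) =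
      ∑ k ∈ Finset.range (n + 1), f (n - k) * g k := by
  rw [PowerSeries.coeff_mul, Finset.Nat.sum_antidiagonal_eq_sum_range_succ_mk]
  simp only [PowerSeries.coeff_mk]
  rw [← Finset.sum_range_reflect]
  refine Finset.sum_congr rfl fun k hk => ?_
  have hk' : k ≤ n := Nat.lt_succ_iff.mp (Finset.mem_range.mp hk)
  rw [Nat.succ_sub_one, Nat.sub_sub_self hk']

/-- With `γ` the convolution inverse of `q` (`γ_0 = 1`, `∑_{k=0}^{n} q_{n-k} γ_k = 0`
for `n ≥ 1`) and `b_{m,n} = ∑_{l=0}^m A_{m-l}^{α_n - 1} γ_l`, the `(C,α_n)` means are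
a matrix transform of the Nörlund means:
`σ_n^{α_n}(S) = ∑_{k=0}^{n} (b_{n-k,n} Q_k / A_n^{α_n}) N_k^{(q)}(S)`. -/
theorem cesaroVar_eq_matrix_transform_of_norlund
    (q : ℕ → ℝ) (hq0 : q 0 = 1) (hqpos : ∀ n, 0 < q n)
    (γ : ℕ → ℝ) (hγ0 : γ 0 = 1)
    (hγ : ∀ n, 1 ≤ n → ∑ k ∈ Finset.range (n + 1), q (n - k) * γ k = 0)
    (α : ℕ → ℝ)
    (b : ℕ → ℕ → ℝ)
    (hb : ∀ m n, b m n = ∑ l ∈ Finset.range (m + 1), cesA (m - l) (α n - 1) * γ l)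
    (s : ℕ → ℝ) (n : ℕ) :
    cesaroVar α s n =
      ∑ k ∈ Finset.range (n + 1),
        (b (n - k) n * bigQ q k / cesA n (α n)) * norlund q s k := by
  have hQne : ∀ k, bigQ q k ≠ 0 := fun k =>
    ne_of_gt (Finset.sum_pos (fun i _ => hqpos i) (by simp))
  -- power series
  set C : PowerSeries ℝ := PowerSeries.mk (fun m => cesA m (α n - 1)) with hC
  set Γ : PowerSeries ℝ := PowerSeries.mk γ with hΓ
  set Q : PowerSeries ℝ := PowerSeries.mk q with hQ
  set S : PowerSeries ℝ := PowerSeries.mk s with hS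
  have hΓQ : Γ * Q = 1 := by
    ext m
    rw [coeff_mk_mul]
    have : ∑ k ∈ Finset.range (m + 1), γ (m - k) * q k
        = ∑ k ∈ Finset.range (m + 1), q (m - k) * γ k := by
      rw [← Finset.sum_range_reflect]
      refine Finset.sum_congr rfl fun k hk => ?_
      have hk' : k ≤ m := Nat.lt_succ_iff.mp (Finset.mem_range.mp hk)
      rw [Nat.succ_sub_one, Nat.sub_sub_self hk', mul_comm]
    rw [this]
    rcases Nat.eq_zero_or_pos m with hm | hm
    · subst hm; simp [hq0, hγ0]
    · rw [hγ m hm]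
      simp [Nat.pos_iff_ne_zero.mp hm, PowerSeries.coeff_one]
  have hB : PowerSeries.mk (fun m => b m n) = C * Γ := by
    ext m
    rw [coeff_mk_mul, PowerSeries.coeff_mk, hb]
  have key : ∑ k ∈ Finset.range (n + 1),
      b (n - k) n * ∑ j ∈ Finset.range (k + 1), q (k - j) * s j
      = ∑ j ∈ Finset.range (n + 1), cesA (n - j) (α n - 1) * s j := by
    have hQS : Q * S = PowerSeries.mk
        (fun k => ∑ j ∈ Finset.range (k + 1), q (k - j) * s j) := by
      ext m
      rw [hQ, hS, coeff_mk_mul, PowerSeries.coeff_mk]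
    have h1 : ∑ k ∈ Finset.range (n + 1),
        b (n - k) n * ∑ j ∈ Finset.range (k + 1), q (k - j) * s j
        = (PowerSeries.coeff n) (PowerSeries.mk (fun m => b m n) * (Q * S)) := by
      rw [hQS, coeff_mk_mul]
    rw [h1, hB, mul_assoc, ← mul_assoc Γ, hΓQ, one_mul, hC, hS, coeff_mk_mul]
  calc cesaroVar α s n
      = (1 / cesA n (α n)) * ∑ k ∈ Finset.range (n + 1),
          b (n - k) n * ∑ j ∈ Finset.range (k + 1), q (k - j) * s j := by
        rw [cesaroVar, key]
    _ = _ := by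
        rw [Finset.mul_sum]
        refine Finset.sum_congr rfl fun k _ => ?_
        rw [norlund]
        field_simp
        rw [mul_div_mul_right _ _ (hQne k)]
end

section
/- Let (q_n)_{n≥0} satisfy q_0 = 1, q_n > 0, q_{n+1}/q_n ≥ q_n/q_{n−1} for n ≥ 1, and q_n/Q_n → 0, where Q_n = ∑_{k=0}^{n} q_k, and let (γ_n) be defined by γ_0 = 1 and ∑_{k=0}^{n} q_{n−k} γ_k = 0 for n ≥ 1. Fix n and α_n ∈ (0,1), and assume in addition that q_m/q_{m−1} ≤ 1 − (1−α_n)/m for all m ≥ 1. Then b_{m,n} := ∑_{l=0}^{m} A_{m−l}^{α_n−1} γ_l ≥ 0 for every m ≥ 0; consequently, the coefficients t_{k,n} = b_{n−k,n} Q_k / A_n^{α_n} satisfy t_{k,n} ≥ 0 and ∑_{k=0}^{n} |t_{k,n}| = ∑_{k=0}^{n} t_{k,n} = 1. -/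
open Finset Filter

lemma cesA_succ' (n : ℕ) (α : ℝ) :
    cesA (n+1) α = cesA n α * (((n:ℝ) + 1 + α) / ((n:ℝ) + 1)) := by
  have h : ((n+1).factorial : ℝ) = (n.factorial : ℝ) * ((n:ℝ)+1) := by
    push_cast [Nat.factorial_succ]; ring
  rw [cesA, cesA, Finset.prod_range_succ, h]
  have h1 : (n.factorial : ℝ) ≠ 0 := by positivity
  have h2 : (n:ℝ) + 1 ≠ 0 := by positivity
  field_simp

lemma cesA_pos' (n : ℕ) (α : ℝ) (h : -1 < α) : 0 < cesA n α := by
  apply div_pos _ (by positivity)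
  apply Finset.prod_pos
  intro i _
  have : (0:ℝ) ≤ i := Nat.cast_nonneg i
  linarith

lemma cesA_shift' (n : ℕ) (a : ℝ) :
    a * cesA n a = ((n:ℝ) + a) * cesA n (a - 1) := by
  rw [cesA, cesA]
  have key : a * ∏ i ∈ Finset.range n, ((i:ℝ) + 1 + a)
      = ((n:ℝ) + a) * ∏ i ∈ Finset.range n, ((i:ℝ) + 1 + (a-1)) := by
    have h1 : ∏ i ∈ Finset.range (n+1), ((i:ℝ) + a)
        = (∏ i ∈ Finset.range n, (((i:ℝ)+1) + a)) * ((0:ℝ) + a) := by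
      rw [Finset.prod_range_succ']
      push_cast
      try rfl
    have h2 : ∏ i ∈ Finset.range (n+1), ((i:ℝ) + a)
        = (∏ i ∈ Finset.range n, ((i:ℝ) + a)) * ((n:ℝ) + a) := Finset.prod_range_succ _ _
    have h3 : ∀ i ∈ Finset.range n, ((i:ℝ) + 1 + (a-1)) = ((i:ℝ) + a) := by intro i _; ring
    rw [Finset.prod_congr rfl h3]
    have h4 : ∀ i ∈ Finset.range n, ((i:ℝ) + 1 + a) = (((i:ℝ)+1) + a) := by intro i _; ring
    rw [Finset.prod_congr rfl h4]
    nlinarith [h1, h2]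
  rw [mul_div_assoc', mul_div_assoc', key]

lemma cesA_sum' (n : ℕ) (a : ℝ) :
    ∑ i ∈ Finset.range (n+1), cesA i (a-1) = cesA n a := by
  induction n with
  | zero => simp [cesA]
  | succ n ih =>
    rw [Finset.sum_range_succ, ih, cesA_succ', cesA_succ']
    have h2 : (n:ℝ) + 1 ≠ 0 := by positivity
    have := cesA_shift' n a
    field_simp
    nlinarith [this]

lemma kaluza' (q γ : ℕ → ℝ) (hq0 : q 0 = 1) (hqpos : ∀ m, 0 < q m)
    (hqconv : ∀ m, 1 ≤ m → q m / q (m - 1) ≤ q (m + 1) / q m)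
    (hγ0 : γ 0 = 1)
    (hγ : ∀ m, 1 ≤ m → ∑ k ∈ Finset.range (m + 1), q (m - k) * γ k = 0) :
    ∀ m, 1 ≤ m → γ m ≤ 0 := by
  have hr : ∀ i j : ℕ, 1 ≤ i → i ≤ j → q i / q (i-1) ≤ q j / q (j-1) := by
    intro i j hi hij
    induction j, hij using Nat.le_induction with
    | base => exact le_refl _
    | succ j hij ih =>
      calc q i / q (i-1) ≤ q j / q (j-1) := ih
        _ ≤ q (j+1) / q j := by
            have := hqconv j (le_trans hi hij)
            simpa using this
  intro m
  induction m using Nat.strong_induction_on with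
  | _ m ih =>
    intro hm
    have h1 := hγ m hm
    rw [Finset.sum_range_succ'] at h1
    simp only [Nat.sub_zero, hγ0, mul_one] at h1
    obtain ⟨m', rfl⟩ : ∃ m', m = m' + 1 := ⟨m - 1, (Nat.succ_pred_eq_of_pos hm).symm⟩
    rw [Finset.sum_range_succ] at h1
    have hqm : q (m' + 1 - (m' + 1)) = q 0 := by norm_num
    rw [hqm, hq0, one_mul] at h1
    have key : -q (m'+1) ≤ ∑ i ∈ Finset.range m', q (m' + 1 - (i+1)) * γ (i+1) := by
      rcases Nat.eq_zero_or_pos m' with h0 | h0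
      · subst h0; simp; exact (hqpos 1).le
      have h2 := hγ m' h0
      rw [Finset.sum_range_succ'] at h2
      simp only [Nat.sub_zero, hγ0, mul_one] at h2
      have hrat : 0 < q m' := hqpos m'
      have hptwise : ∀ i ∈ Finset.range m',
          q (m'+1) / q m' * (q (m' - (i+1)) * γ (i+1)) ≤ q (m' + 1 - (i+1)) * γ (i+1) := by
        intro i hi
        rw [Finset.mem_range] at hi
        have hγi : γ (i+1) ≤ 0 := ih (i+1) (by omega) (by omega)
        have hle : q (m' + 1 - (i+1)) ≤ q (m'+1) / q m' * q (m' - (i+1)) := by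
          have h3 : q (m' - i) / q (m' - i - 1) ≤ q (m'+1) / q (m'+1-1) :=
            hr (m' - i) (m'+1) (by omega) (by omega)
          have e1 : m' + 1 - (i+1) = m' - i := by omega
          have e2 : m' - (i+1) = m' - i - 1 := by omega
          have h4 : 0 < q (m' - i - 1) := hqpos _
          rw [div_le_div_iff₀ h4 (by simpa using hrat)] at h3
          rw [e1, e2]
          simp only [Nat.add_sub_cancel] at h3
          rw [div_mul_eq_mul_div, le_div_iff₀ hrat]
          linarith [h3]
        nlinarith [hγi, hle]
      calc -q (m'+1)
          = q (m'+1) / q m' * ∑ i ∈ Finset.range m', q (m' - (i+1)) * γ (i+1) := by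
            have : ∑ i ∈ Finset.range m', q (m' - (i+1)) * γ (i+1) = -q m' := by linarith
            rw [this]; field_simp
        _ = ∑ i ∈ Finset.range m', q (m'+1) / q m' * (q (m' - (i+1)) * γ (i+1)) := by
            rw [Finset.mul_sum]
        _ ≤ _ := Finset.sum_le_sum hptwise
    linarith

lemma hAq' (q : ℕ → ℝ) (hqpos : ∀ m, 0 < q m) (a : ℝ) (ha : a ∈ Set.Ioo (0:ℝ) 1)
    (hcond : ∀ m : ℕ, 1 ≤ m → q m / q (m - 1) ≤ 1 - (1 - a) / m) :
    ∀ j k : ℕ, j ≤ k → cesA j (a-1) * q k ≤ cesA k (a-1) * q j := by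
  intro j k hjk
  induction k, hjk using Nat.le_induction with
  | base => exact le_refl _
  | succ k hjk ih =>
    have hc := hcond (k+1) (by omega)
    have e : ((k+1:ℕ):ℝ) = (k:ℝ)+1 := by push_cast; ring
    rw [e] at hc
    simp only [Nat.add_sub_cancel] at hc
    have hk1 : (0:ℝ) < (k:ℝ)+1 := by positivity
    have h2 : 1 - (1-a)/((k:ℝ)+1) = ((k:ℝ)+a)/((k:ℝ)+1) := by field_simp; ring
    rw [h2, div_le_div_iff₀ (hqpos k) hk1] at hc
    have hA : cesA (k+1) (a-1) = cesA k (a-1) * (((k:ℝ)+a)/((k:ℝ)+1)) := by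
      rw [cesA_succ']; ring_nf
    rw [hA]
    have hApos : 0 < cesA j (a-1) := cesA_pos' _ _ (by simp [Set.mem_Ioo] at ha; linarith [ha.1])
    have hAkpos : 0 < cesA k (a-1) := cesA_pos' _ _ (by simp [Set.mem_Ioo] at ha; linarith [ha.1])
    have step : cesA j (a-1) * q (k+1) ≤ cesA j (a-1) * (((k:ℝ)+a)/((k:ℝ)+1) * q k) := by
      apply mul_le_mul_of_nonneg_left _ hApos.le
      rw [div_mul_eq_mul_div, le_div_iff₀ hk1]
      linarith
    calc cesA j (a-1) * q (k+1) ≤ ((k:ℝ)+a)/((k:ℝ)+1) * (cesA j (a-1) * q k) := by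
          linarith [step]
      _ ≤ ((k:ℝ)+a)/((k:ℝ)+1) * (cesA k (a-1) * q j) := by
          apply mul_le_mul_of_nonneg_left ih
          have : (0:ℝ) ≤ (k:ℝ) := Nat.cast_nonneg k
          have ha1 : 0 < a := by simp [Set.mem_Ioo] at ha; exact ha.1
          positivity
      _ = cesA k (a-1) * (((k:ℝ)+a)/((k:ℝ)+1)) * q j := by ring

lemma conv_identity' (q γ : ℕ → ℝ) (hq0 : q 0 = 1) (hγ0 : γ 0 = 1)
    (hγ : ∀ m, 1 ≤ m → ∑ k ∈ Finset.range (m + 1), q (m - k) * γ k = 0)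
    (a : ℝ) (b : ℕ → ℝ)
    (hb : ∀ m, b m = ∑ l ∈ Finset.range (m + 1), cesA (m - l) (a - 1) * γ l) (n : ℕ) :
    ∑ k ∈ Finset.range (n + 1), b (n - k) * bigQ q k
      = ∑ i ∈ Finset.range (n + 1), cesA i (a - 1) := by
  set G : PowerSeries ℝ := PowerSeries.mk γ with hG
  set Qs : PowerSeries ℝ := PowerSeries.mk q with hQs
  set As : PowerSeries ℝ := PowerSeries.mk (fun m => cesA m (a-1)) with hAs
  set Os : PowerSeries ℝ := PowerSeries.mk (fun _ => (1:ℝ)) with hOs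
  have hGQ : G * Qs = 1 := by
    ext m
    rw [PowerSeries.coeff_mul, Finset.Nat.sum_antidiagonal_eq_sum_range_succ_mk]
    simp only [hG, hQs, PowerSeries.coeff_mk]
    match m with
    | 0 => simp [hγ0, hq0]
    | (m+1) =>
      rw [PowerSeries.coeff_one]
      simp only [Nat.succ_ne_zero, if_false]
      have := hγ (m+1) (Nat.le_add_left 1 m)
      rw [← this]
      exact Finset.sum_congr rfl (fun k _ => mul_comm _ _)
  have hBeq : PowerSeries.mk b = G * As := by
    ext m
    rw [PowerSeries.coeff_mul, Finset.Nat.sum_antidiagonal_eq_sum_range_succ_mk]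
    simp only [hG, hAs, PowerSeries.coeff_mk, hb m]
    exact Finset.sum_congr rfl (fun k _ => mul_comm _ _)
  have hQeq : PowerSeries.mk (bigQ q) = Qs * Os := by
    ext m
    rw [PowerSeries.coeff_mul, Finset.Nat.sum_antidiagonal_eq_sum_range_succ_mk]
    simp only [hQs, hOs, PowerSeries.coeff_mk, bigQ, mul_one]
  have hmain : PowerSeries.mk (bigQ q) * PowerSeries.mk b = As * Os := by
    rw [hQeq, hBeq]
    calc Qs * Os * (G * As) = (G * Qs) * (As * Os) := by ring
    _ = As * Os := by rw [hGQ, one_mul]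
  have h1 := congrArg (PowerSeries.coeff n) hmain
  rw [PowerSeries.coeff_mul, Finset.Nat.sum_antidiagonal_eq_sum_range_succ_mk,
      PowerSeries.coeff_mul, Finset.Nat.sum_antidiagonal_eq_sum_range_succ_mk] at h1
  simp only [hAs, hOs, PowerSeries.coeff_mk, mul_one] at h1
  rw [← h1]
  exact Finset.sum_congr rfl (fun k _ => mul_comm _ _)

/-- Under the Hardy-type conditions on `(q_n)` and the compatibility condition
`q_m/q_{m-1} ≤ 1 - (1-α_n)/m`, the coefficients
`b_{m,n} = ∑_{l=0}^m A_{m-l}^{α_n-1} γ_l` are nonnegative; consequently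
`t_{k,n} = b_{n-k,n} Q_k / A_n^{α_n}` satisfy `t_{k,n} ≥ 0` and
`∑_{k=0}^n |t_{k,n}| = ∑_{k=0}^n t_{k,n} = 1`. -/
theorem matrix_coefficients_nonneg_and_sum_one
    (q : ℕ → ℝ) (hq0 : q 0 = 1) (hqpos : ∀ m, 0 < q m)
    (hqconv : ∀ m, 1 ≤ m → q m / q (m - 1) ≤ q (m + 1) / q m)
    (hqQ : Filter.Tendsto (fun m => q m / bigQ q m) Filter.atTop (nhds 0))
    (γ : ℕ → ℝ) (hγ0 : γ 0 = 1)
    (hγ : ∀ m, 1 ≤ m → ∑ k ∈ Finset.range (m + 1), q (m - k) * γ k = 0)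
    (n : ℕ) (a : ℝ) (ha : a ∈ Set.Ioo (0 : ℝ) 1)
    (hcond : ∀ m : ℕ, 1 ≤ m → q m / q (m - 1) ≤ 1 - (1 - a) / m)
    (b : ℕ → ℝ) (hb : ∀ m, b m = ∑ l ∈ Finset.range (m + 1), cesA (m - l) (a - 1) * γ l)
    (t : ℕ → ℝ) (ht : ∀ k, t k = b (n - k) * bigQ q k / cesA n a) :
    (∀ m, 0 ≤ b m) ∧ (∀ k ∈ Finset.range (n + 1), 0 ≤ t k) ∧
      (∑ k ∈ Finset.range (n + 1), |t k| = ∑ k ∈ Finset.range (n + 1), t k) ∧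
      (∑ k ∈ Finset.range (n + 1), t k = 1) := by
  obtain ⟨ha0, ha1⟩ := ha
  have haIoo : a ∈ Set.Ioo (0:ℝ) 1 := ⟨ha0, ha1⟩
  have hAm : ∀ m, 0 < cesA m (a-1) := fun m => cesA_pos' m (a-1) (by linarith)
  have hAa : ∀ m, 0 < cesA m a := fun m => cesA_pos' m a (by linarith)
  have hγneg : ∀ m, 1 ≤ m → γ m ≤ 0 := kaluza' q γ hq0 hqpos hqconv hγ0 hγ
  have hAqle := hAq' q hqpos a haIoo hcond
  -- b nonneg
  have hbnn : ∀ m, 0 ≤ b m := by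
    intro m
    match m with
    | 0 => rw [hb 0]; simp [hγ0, cesA]
    | (m+1) =>
      rw [hb (m+1), Finset.sum_range_succ']
      simp only [Nat.sub_zero, hγ0, mul_one]
      have h1 := hγ (m+1) (Nat.le_add_left 1 m)
      rw [Finset.sum_range_succ'] at h1
      simp only [Nat.sub_zero, hγ0, mul_one] at h1
      -- h1 : ∑ i ∈ range (m+1), q (m+1-(i+1)) * γ (i+1) + q (m+1) = 0
      have hqm1 : 0 < q (m+1) := hqpos (m+1)
      have hpt : ∀ i ∈ Finset.range (m+1),
          cesA (m+1) (a-1) / q (m+1) * (q (m+1-(i+1)) * γ (i+1))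
            ≤ cesA (m+1-(i+1)) (a-1) * γ (i+1) := by
        intro i hi
        have hγi : γ (i+1) ≤ 0 := hγneg (i+1) (by omega)
        have hle : cesA (m+1-(i+1)) (a-1) ≤ cesA (m+1) (a-1) / q (m+1) * q (m+1-(i+1)) := by
          have := hAqle (m+1-(i+1)) (m+1) (by omega)
          rw [div_mul_eq_mul_div, le_div_iff₀ hqm1]
          linarith [this]
        nlinarith [hγi, hle]
      have hsum : ∑ i ∈ Finset.range (m+1),
          cesA (m+1) (a-1) / q (m+1) * (q (m+1-(i+1)) * γ (i+1)) = -cesA (m+1) (a-1) := by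
        rw [← Finset.mul_sum]
        have : ∑ i ∈ Finset.range (m+1), q (m+1-(i+1)) * γ (i+1) = -q (m+1) := by linarith
        rw [this]
        field_simp
      have := Finset.sum_le_sum hpt
      rw [hsum] at this
      linarith
  refine ⟨hbnn, ?_, ?_, ?_⟩
  · intro k _
    rw [ht k]
    have hQpos : 0 < bigQ q k := by
      apply Finset.sum_pos (fun i _ => hqpos i)
      exact Finset.nonempty_range_add_one
    exact div_nonneg (mul_nonneg (hbnn _) hQpos.le) (hAa n).le
  · apply Finset.sum_congr rfl
    intro k hk
    apply abs_of_nonneg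
    rw [ht k]
    have hQpos : 0 < bigQ q k := by
      apply Finset.sum_pos (fun i _ => hqpos i)
      exact Finset.nonempty_range_add_one
    exact div_nonneg (mul_nonneg (hbnn _) hQpos.le) (hAa n).le
  · have hid := conv_identity' q γ hq0 hγ0 hγ a b hb n
    rw [cesA_sum'] at hid
    have : ∑ k ∈ Finset.range (n+1), t k
        = (∑ k ∈ Finset.range (n+1), b (n-k) * bigQ q k) / cesA n a := by
      rw [Finset.sum_div]
      exact Finset.sum_congr rfl (fun k _ => by rw [ht k])
    rw [this, hid, div_self (ne_of_gt (hAa n))]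
end
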